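/- Let G be a graph with minimum degree at least 1, and let u and v be non-adjacent vertices of G such that d(u) ≥ d(u′) for every neighbor u′ of u, and d(v) ≥ d(v′) for every neighbor v′ of v. Then HSO(G + uv) > HSO(G). -/

import Mathlib

open SimpleGraph Finset Real

noncomputable def HSO {V : Type*} [Fintype V] (G : SimpleGraph V) : ℝ :=
  letI := Classical.decRel G.Adj
  ∑ e ∈ G.edgeFinset, Sym2.lift
    ⟨fun x y => Real.sqrt ((G.degree x : ℝ) ^ 2 + (G.degree y : ℝ) ^ 2) /
      min (G.degree x : ℝ) (G.degree y : ℝ),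
     fun x y => by simp [add_comm, min_comm]⟩ e

noncomputable def SO {V : Type*} [Fintype V] (G : SimpleGraph V) : ℝ :=
  letI := Classical.decRel G.Adj
  ∑ e ∈ G.edgeFinset, Sym2.lift
    ⟨fun x y => Real.sqrt ((G.degree x : ℝ) ^ 2 + (G.degree y : ℝ) ^ 2),
     fun x y => by simp [add_comm]⟩ e

noncomputable def cDSO {V : Type*} [Fintype V] (G : SimpleGraph V) : ℝ :=
  letI := Classical.decRel G.Adj
  ∑ e ∈ G.edgeFinset, Sym2.lift
    ⟨fun x y => Real.sqrt ((G.degree x : ℝ) ^ 2 + (G.degree y : ℝ) ^ 2) /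
      max (G.degree x : ℝ) (G.degree y : ℝ),
     fun x y => by simp [add_comm, max_comm]⟩ e

noncomputable def M1 {V : Type*} [Fintype V] (G : SimpleGraph V) : ℝ :=
  letI := Classical.decRel G.Adj
  ∑ e ∈ G.edgeFinset, Sym2.lift
    ⟨fun x y => (G.degree x : ℝ) + (G.degree y : ℝ),
     fun x y => by simp [add_comm]⟩ e

def IsRegularGraph {V : Type*} [Fintype V] (G : SimpleGraph V) : Prop :=
  letI := Classical.decRel G.Adj
  ∃ k, G.IsRegularOfDegree k

def addEdge {V : Type*} (G : SimpleGraph V) (u v : V) : SimpleGraph V :=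
  G ⊔ SimpleGraph.fromEdgeSet {s(u, v)}

section Aux
variable {V : Type*} [Fintype V]

set_option linter.unusedSectionVars false

lemma degree_congr (G : SimpleGraph V) (w : V) {i1 i2 : Fintype (G.neighborSet w)} :
    @SimpleGraph.degree V G w i1 = @SimpleGraph.degree V G w i2 := by
  obtain rfl := Subsingleton.elim i1 i2; rfl

lemma edgeFinset_congr (G : SimpleGraph V) {i1 i2 : Fintype G.edgeSet} :
    @SimpleGraph.edgeFinset V G i1 = @SimpleGraph.edgeFinset V G i2 := by
  obtain rfl := Subsingleton.elim i1 i2; rfl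

lemma hso_summand_congr (G : SimpleGraph V) {i1 i2 : ∀ w, Fintype (G.neighborSet w)}
    (e : Sym2 V) :
    Sym2.lift
      ⟨fun x y => Real.sqrt ((@SimpleGraph.degree V G x (i1 x) : ℝ) ^ 2 +
          (@SimpleGraph.degree V G y (i1 y) : ℝ) ^ 2) /
        min (@SimpleGraph.degree V G x (i1 x) : ℝ) (@SimpleGraph.degree V G y (i1 y) : ℝ),
       fun x y => by simp [add_comm, min_comm]⟩ e =
    Sym2.lift
      ⟨fun x y => Real.sqrt ((@SimpleGraph.degree V G x (i2 x) : ℝ) ^ 2 +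
          (@SimpleGraph.degree V G y (i2 y) : ℝ) ^ 2) /
        min (@SimpleGraph.degree V G x (i2 x) : ℝ) (@SimpleGraph.degree V G y (i2 y) : ℝ),
       fun x y => by simp [add_comm, min_comm]⟩ e := by
  obtain rfl := Subsingleton.elim i1 i2; rfl

lemma addEdge_adj (G : SimpleGraph V) (u v x y : V) :
    (addEdge G u v).Adj x y ↔ G.Adj x y ∨ (x = u ∧ y = v ∨ x = v ∧ y = u) ∧ x ≠ y := by
  simp [addEdge, Sym2.eq_iff]

lemma addEdge_comm (G : SimpleGraph V) (u v : V) : addEdge G u v = addEdge G v u := by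
  unfold addEdge; rw [Sym2.eq_swap]

lemma addEdge_degree_left [DecidableEq V] (G : SimpleGraph V) (u v : V)
    (hne : u ≠ v) (h : ¬ G.Adj u v)
    [Fintype ((addEdge G u v).neighborSet u)] [Fintype (G.neighborSet u)] :
    (addEdge G u v).degree u = G.degree u + 1 := by
  have key : (addEdge G u v).neighborFinset u = insert v (G.neighborFinset u) := by
    ext w
    simp only [mem_neighborFinset, addEdge_adj, Finset.mem_insert]
    constructor
    · rintro (h1 | ⟨h2 | ⟨rfl, rfl⟩, hne2⟩)
      · exact Or.inr h1
      · exact Or.inl h2.2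
      · exact absurd rfl hne2
    · rintro (rfl | h1)
      · exact Or.inr ⟨Or.inl ⟨trivial, rfl⟩, hne⟩
      · exact Or.inl h1
  have hv : v ∉ G.neighborFinset u := by simp [h]
  rw [SimpleGraph.degree, key, Finset.card_insert_of_notMem hv, SimpleGraph.degree]

lemma addEdge_degree_other (G : SimpleGraph V) (u v w : V) (hwu : w ≠ u) (hwv : w ≠ v)
    [Fintype ((addEdge G u v).neighborSet w)] [Fintype (G.neighborSet w)] :
    (addEdge G u v).degree w = G.degree w := by
  have key : (addEdge G u v).neighborFinset w = G.neighborFinset w := by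
    ext x
    simp only [mem_neighborFinset, addEdge_adj]
    constructor
    · rintro (h1 | ⟨⟨rfl, rfl⟩ | ⟨rfl, rfl⟩, _⟩)
      · exact h1
      · exact absurd rfl hwu
      · exact absurd rfl hwv
    · exact fun h1 => Or.inl h1
  rw [SimpleGraph.degree, key, SimpleGraph.degree]

lemma f_mono {a b a' b' : ℝ} (ha : 1 ≤ a) (hb : 1 ≤ b) (haa : a ≤ a') (hbb : b ≤ b')
    (hmin : min a b = min a' b') :
    Real.sqrt (a ^ 2 + b ^ 2) / min a b ≤ Real.sqrt (a' ^ 2 + b' ^ 2) / min a' b' := by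
  rw [← hmin]
  have hc : (0:ℝ) < min a b := lt_min (by linarith) (by linarith)
  gcongr

lemma f_mono_nat {dx dy dx' dy' : ℕ} (h1 : 1 ≤ dx) (h2 : 1 ≤ dy) (h3 : dx ≤ dx')
    (h4 : dy ≤ dy') (h5 : min dx dy = min dx' dy') :
    Real.sqrt ((dx:ℝ) ^ 2 + (dy:ℝ) ^ 2) / min (dx:ℝ) (dy:ℝ) ≤
      Real.sqrt ((dx':ℝ) ^ 2 + (dy':ℝ) ^ 2) / min (dx':ℝ) (dy':ℝ) := by
  refine f_mono ?_ ?_ ?_ ?_ ?_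
  · exact_mod_cast h1
  · exact_mod_cast h2
  · exact_mod_cast h3
  · exact_mod_cast h4
  · rw [← Nat.cast_min, ← Nat.cast_min, h5]

lemma main_aux (G : SimpleGraph V) (u v : V) (huv : u ≠ v) (hnadj : ¬ G.Adj u v)
    [iE : Fintype G.edgeSet] [iE' : Fintype (addEdge G u v).edgeSet]
    [iD : ∀ w, Fintype (G.neighborSet w)] [iD' : ∀ w, Fintype ((addEdge G u v).neighborSet w)]
    (hd1 : ∀ w, 1 ≤ G.degree w)
    (hNu : ∀ w, G.Adj u w → G.degree w ≤ G.degree u)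
    (hNv : ∀ w, G.Adj v w → G.degree w ≤ G.degree v) :
    ∑ e ∈ G.edgeFinset, Sym2.lift
      ⟨fun x y => Real.sqrt ((G.degree x : ℝ) ^ 2 + (G.degree y : ℝ) ^ 2) /
        min (G.degree x : ℝ) (G.degree y : ℝ),
       fun x y => by simp [add_comm, min_comm]⟩ e <
    ∑ e ∈ (addEdge G u v).edgeFinset, Sym2.lift
      ⟨fun x y => Real.sqrt (((addEdge G u v).degree x : ℝ) ^ 2 + ((addEdge G u v).degree y : ℝ) ^ 2) /
        min (((addEdge G u v).degree x : ℝ)) (((addEdge G u v).degree y : ℝ)),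
       fun x y => by simp [add_comm, min_comm]⟩ e := by
  classical
  have hdu : (addEdge G u v).degree u = G.degree u + 1 :=
    addEdge_degree_left G u v huv hnadj
  have hdv : (addEdge G u v).degree v = G.degree v + 1 := by
    have h2 : (addEdge G v u).degree v = G.degree v + 1 :=
      addEdge_degree_left G v u huv.symm (fun h => hnadj h.symm)
    rw [addEdge_comm] at h2
    exact (degree_congr (addEdge G u v) v).trans h2
  have hdo : ∀ w, w ≠ u → w ≠ v → (addEdge G u v).degree w = G.degree w :=
    fun w h1 h2 => addEdge_degree_other G u v w h1 h2
  have hsub : G.edgeFinset ⊆ (addEdge G u v).edgeFinset := by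
    intro e he
    rw [mem_edgeFinset] at he ⊢
    exact SimpleGraph.edgeSet_mono le_sup_left he
  have hmem : s(u, v) ∈ (addEdge G u v).edgeFinset := by
    rw [mem_edgeFinset, mem_edgeSet]
    exact (addEdge_adj G u v u v).mpr (Or.inr ⟨Or.inl ⟨rfl, rfl⟩, huv⟩)
  have hnot : s(u, v) ∉ G.edgeFinset := by
    rw [mem_edgeFinset, mem_edgeSet]
    exact hnadj
  have step : ∀ e ∈ G.edgeFinset, Sym2.lift
      ⟨fun x y => Real.sqrt ((G.degree x : ℝ) ^ 2 + (G.degree y : ℝ) ^ 2) /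
        min (G.degree x : ℝ) (G.degree y : ℝ),
       fun x y => by simp [add_comm, min_comm]⟩ e ≤ Sym2.lift
      ⟨fun x y => Real.sqrt (((addEdge G u v).degree x : ℝ) ^ 2 + ((addEdge G u v).degree y : ℝ) ^ 2) /
        min (((addEdge G u v).degree x : ℝ)) (((addEdge G u v).degree y : ℝ)),
       fun x y => by simp [add_comm, min_comm]⟩ e := by
    intro e he
    induction e using Sym2.ind with
    | _ x y =>
      rw [mem_edgeFinset, mem_edgeSet] at he
      simp only [Sym2.lift_mk]
      by_cases hxu : x = u
      · have he' : G.Adj u y := hxu ▸ he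
        have hyu : y ≠ u := fun h => G.irrefl (h ▸ he')
        have hyv : y ≠ v := fun h => hnadj (h ▸ he')
        rw [hxu, hdu, hdo y hyu hyv]
        exact f_mono_nat (hd1 u) (hd1 y) (Nat.le_succ _) le_rfl (by have := hNu y he'; omega)
      · by_cases hxv : x = v
        · have he' : G.Adj v y := hxv ▸ he
          have hyv : y ≠ v := fun h => G.irrefl (h ▸ he')
          have hyu : y ≠ u := fun h => hnadj ((h ▸ he').symm)
          rw [hxv, hdv, hdo y hyu hyv]
          exact f_mono_nat (hd1 v) (hd1 y) (Nat.le_succ _) le_rfl (by have := hNv y he'; omega)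
        · by_cases hyu : y = u
          · have he' : G.Adj u x := (hyu ▸ he).symm
            rw [hyu, hdu, hdo x hxu hxv]
            exact f_mono_nat (hd1 x) (hd1 u) le_rfl (Nat.le_succ _) (by have := hNu x he'; omega)
          · by_cases hyv : y = v
            · have he' : G.Adj v x := (hyv ▸ he).symm
              rw [hyv, hdv, hdo x hxu hxv]
              exact f_mono_nat (hd1 x) (hd1 v) le_rfl (Nat.le_succ _) (by have := hNv x he'; omega)
            · rw [hdo x hxu hxv, hdo y hyu hyv]
  refine lt_of_le_of_lt (Finset.sum_le_sum step) ?_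
  refine Finset.sum_lt_sum_of_subset hsub hmem hnot ?_ ?_
  · simp only [Sym2.lift_mk]
    have h1 : (0:ℝ) < ((addEdge G u v).degree u : ℝ) := by
      rw [hdu]; exact_mod_cast Nat.succ_pos _
    have h2 : (0:ℝ) < ((addEdge G u v).degree v : ℝ) := by
      rw [hdv]; exact_mod_cast Nat.succ_pos _
    apply div_pos
    · apply Real.sqrt_pos.mpr
      have := pow_pos h1 2
      nlinarith [sq_nonneg ((addEdge G u v).degree v : ℝ)]
    · exact lt_min h1 h2
  · intro j _ _
    induction j using Sym2.ind with
    | _ x y =>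
      simp only [Sym2.lift_mk]
      exact div_nonneg (Real.sqrt_nonneg _) (le_min (Nat.cast_nonneg _) (Nat.cast_nonneg _))

end Aux

theorem stmt4 {V : Type*} [Fintype V] (G : SimpleGraph V) [DecidableRel G.Adj]
    (hδ : 1 ≤ G.minDegree)
    (u v : V) (huv : u ≠ v) (hnadj : ¬ G.Adj u v)
    (hNu : ∀ w, G.Adj u w → G.degree w ≤ G.degree u)
    (hNv : ∀ w, G.Adj v w → G.degree w ≤ G.degree v) :
    HSO G < HSO (addEdge G u v) := by
  classical
  have hd1 : ∀ w, 1 ≤ G.degree w := fun w => hδ.trans (G.minDegree_le_degree w)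
  unfold HSO
  have key := main_aux G u v huv hnadj
    (fun w => le_trans (hd1 w) (degree_congr G w).le)
    (fun w h => (degree_congr G w).trans_le ((hNu w h).trans (degree_congr G u).le))
    (fun w h => (degree_congr G w).trans_le ((hNv w h).trans (degree_congr G v).le))
  convert key using 2 with e he
  · exact edgeFinset_congr G
  · congr! 10
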